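/- Let G be a sheaf of abelian groups on a topological space X and W = {W_α}_{α∈I} a locally finite open covering of X. Suppose G admits a partition of unity subordinate to W, i.e., there are sheaf endomorphisms ρ_α: G → G and closed sets S_α ⊆ W_α such that the stalk map (ρ_α)_x is zero for every x ∉ S_α and Σ_α ρ_α = id (the locally finite sum of the ρ_α is the identity). Then the Čech cohomology H^q(W;G) vanishes for all q ≥ 1; explicitly, every Čech q-cocycle σ ∈ C^q(W;G) with δσ = 0 is of the form σ = δτ, where τ_{α_0…α_{q-1}} = Σ_α ρ_α σ_{α α_0 … α_{q-1}}, each term being extended by zero from W_{α α_0 … α_{q-1}} to W_{α_0…α_{q-1}} using that its support lies in the closed set S_α. -/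

import Mathlib

/-!
Statement 11: if a sheaf of abelian groups admits a partition of unity subordinate to a
locally finite open covering `W`, then every positive-degree Čech cocycle on `W` is a
Čech coboundary, i.e. `H^q(W;G) = 0` for `q ≥ 1`.
-/

open CategoryTheory CategoryTheory.Limits TopologicalSpace Opposite

universe u

namespace Paper

variable {X : TopCat.{u}} {ι : Type u}

/-- The intersection of the members of an open covering along a multi-index. -/
def iInt (W : ι → Opens ↑X) {n : ℕ} (αs : Fin n → ι) : Opens ↑X := ⨅ k, W (αs k)

/-- Čech cochains in degree `n` of a presheaf of abelian groups with respect to an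
open covering. -/
abbrev cechPi (F : TopCat.Presheaf AddCommGrpCat.{u} X) (W : ι → Opens ↑X) (n : ℕ) : Type u :=
  ∀ αs : Fin (n + 1) → ι, ↥(F.obj (op (iInt W αs)))

/-- The Čech differential (as a function). -/
def cechδfun (F : TopCat.Presheaf AddCommGrpCat.{u} X) (W : ι → Opens ↑X) (n : ℕ)
    (σ : cechPi F W n) : cechPi F W (n + 1) := fun βs =>
  ∑ ν : Fin (n + 2), ((-1 : ℤ) ^ (ν : ℕ)) •
    (F.map (homOfLE (le_iInf fun j => iInf_le (fun k => W (βs k)) (ν.succAbove j))).op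
      (σ (βs ∘ ν.succAbove)))

/-- The Čech differential. -/
def cechδ (F : TopCat.Presheaf AddCommGrpCat.{u} X) (W : ι → Opens ↑X) (n : ℕ) :
    cechPi F W n →+ cechPi F W (n + 1) :=
  AddMonoidHom.mk' (cechδfun F W n) (fun σ τ => by
    funext βs
    change _ = cechδfun F W n σ βs + cechδfun F W n τ βs
    unfold cechδfun
    refine Eq.trans ?_ Finset.sum_add_distrib
    refine Finset.sum_congr rfl fun ν _ => ?_
    refine Eq.trans ?_ (smul_add _ _ _)
    congr 1
    first
      | exact map_add _ _ _
      | exact (map_add (ConcreteCategory.hom _) _ _ :)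
      | exact AddMonoidHom.map_add _ _ _)

/-- A partition of unity for a sheaf of abelian groups `G`, subordinate to a locally
finite open covering `W`: sheaf endomorphisms `ρ i` supported in closed sets `S i ⊆ W i`
whose (locally finite) sum is the identity. -/
structure PartitionOfUnity (G : TopCat.Sheaf AddCommGrpCat.{u} X) (W : ι → Opens ↑X) where
  ρ : ι → (G.val ⟶ G.val)
  S : ι → Set ↑X
  S_closed : ∀ i, IsClosed (S i)
  S_subset : ∀ i, S i ⊆ (W i : Set ↑X)
  vanish : ∀ (i : ι) (x : ↑X), x ∉ S i →
    (TopCat.Presheaf.stalkFunctor AddCommGrpCat.{u} x).map (ρ i) = 0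
  sum_eq : ∀ (U : Opens ↑X) (s : ↥(G.val.obj (op U))) (x : ↑X), x ∈ U →
    ∃ (U' : Opens ↑X) (_ : x ∈ U') (hU' : U' ≤ U) (t : Finset ι),
      (∀ i ∉ t, G.val.map (homOfLE hU').op ((ρ i).app (op U) s) = 0) ∧
      (∑ i ∈ t, G.val.map (homOfLE hU').op ((ρ i).app (op U) s))
        = G.val.map (homOfLE hU').op s

/-! ### Auxiliary lemmas -/

open TopCat

lemma mySectionExt (G : TopCat.Sheaf AddCommGrpCat.{u} X) (U : Opens ↑X)
    (s t : ↥(G.val.obj (op U)))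
    (h : ∀ (x : ↑X) (hx : x ∈ U), Presheaf.germ G.val U x hx s = Presheaf.germ G.val U x hx t) :
    s = t :=
  TopCat.Presheaf.section_ext G U s t h

lemma myGermRes (G : TopCat.Sheaf AddCommGrpCat.{u} X) {U V : Opens ↑X} (h : U ≤ V) (x : ↑X)
    (hx : x ∈ U) (s : ↥(G.val.obj (op V))) :
    Presheaf.germ G.val U x hx (G.val.map (homOfLE h).op s) = Presheaf.germ G.val V x (h hx) s :=
  TopCat.Presheaf.germ_res_apply G.val (homOfLE h) x hx s

lemma myStalkMap (G : TopCat.Sheaf AddCommGrpCat.{u} X) (U : Opens ↑X) (x : ↑X) (hx : x ∈ U)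
    (f : G.val ⟶ G.val) (s : ↥(G.val.obj (op U))) :
    (TopCat.Presheaf.stalkFunctor AddCommGrpCat.{u} x).map f (Presheaf.germ G.val U x hx s)
      = Presheaf.germ G.val U x hx (f.app (op U) s) :=
  TopCat.Presheaf.stalkFunctor_map_germ_apply U x hx f s

lemma myGluing (G : TopCat.Sheaf AddCommGrpCat.{u} X) {κ : Type u} (V : κ → Opens ↑X)
    (U : Opens ↑X) (hVU : ∀ k, V k ≤ U) (hcover : U ≤ iSup V)
    (sf : ∀ k, ↥(G.val.obj (op (V k))))
    (hcomp : ∀ i j, G.val.map (homOfLE (inf_le_left : V i ⊓ V j ≤ V i)).op (sf i)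
      = G.val.map (homOfLE (inf_le_right : V i ⊓ V j ≤ V j)).op (sf j)) :
    ∃ s : ↥(G.val.obj (op U)), ∀ k, G.val.map (homOfLE (hVU k)).op s = sf k := by
  obtain ⟨s, hs, -⟩ := G.existsUnique_gluing' V U (fun k => homOfLE (hVU k)) hcover sf hcomp
  exact ⟨s, hs⟩

lemma glueTwo (G : TopCat.Sheaf AddCommGrpCat.{u} X) (A B U : Opens ↑X)
    (hA : A ≤ U) (hB : B ≤ U) (hcover : ∀ x, x ∈ U → x ∈ A ∨ x ∈ B)
    (sA : ↥(G.val.obj (op A))) (sB : ↥(G.val.obj (op B)))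
    (hAB : G.val.map (homOfLE (inf_le_left : A ⊓ B ≤ A)).op sA
      = G.val.map (homOfLE (inf_le_right : A ⊓ B ≤ B)).op sB) :
    ∃ s : ↥(G.val.obj (op U)),
      G.val.map (homOfLE hA).op s = sA ∧ G.val.map (homOfLE hB).op s = sB := by
  classical
  let V : ULift.{u} Bool → Opens ↑X := fun b => Bool.casesOn b.down B A
  let sf : ∀ b, ↥(G.val.obj (op (V b))) := fun b =>
    Bool.casesOn (motive := fun c => ↥(G.val.obj (op (Bool.casesOn c B A)))) b.down sB sA
  have hVU : ∀ b, V b ≤ U := fun b => by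
    rcases b with ⟨b⟩; cases b
    · exact hB
    · exact hA
  have hcover' : U ≤ iSup V := by
    intro x hx
    rcases hcover x hx with h | h
    · exact Opens.mem_iSup.2 ⟨⟨true⟩, h⟩
    · exact Opens.mem_iSup.2 ⟨⟨false⟩, h⟩
  have hcomp : ∀ i j, G.val.map (homOfLE (inf_le_left : V i ⊓ V j ≤ V i)).op (sf i)
      = G.val.map (homOfLE (inf_le_right : V i ⊓ V j ≤ V j)).op (sf j) := by
    intro i j
    have key : ∀ (x : ↑X) (hxA : x ∈ A) (hxB : x ∈ B),
        Presheaf.germ G.val A x hxA sA = Presheaf.germ G.val B x hxB sB := by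
      intro x hxA hxB
      have h : Presheaf.germ G.val (A ⊓ B) x ⟨hxA, hxB⟩
            (G.val.map (homOfLE (inf_le_left : A ⊓ B ≤ A)).op sA)
          = Presheaf.germ G.val (A ⊓ B) x ⟨hxA, hxB⟩
            (G.val.map (homOfLE (inf_le_right : A ⊓ B ≤ B)).op sB) := by rw [hAB]
      erw [myGermRes, myGermRes] at h; exact h
    apply mySectionExt G
    intro x hx
    rw [myGermRes, myGermRes]
    rcases i with ⟨i⟩; rcases j with ⟨j⟩
    cases i <;> cases j
    · rfl
    · exact (key x hx.2 hx.1).symm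
    · exact key x hx.1 hx.2
    · rfl
  obtain ⟨s, hs⟩ := myGluing G V U hVU hcover' sf hcomp
  exact ⟨s, hs ⟨true⟩, hs ⟨false⟩⟩

lemma extendByZero (G : TopCat.Sheaf AddCommGrpCat.{u} X) {S : Set ↑X} (hS : IsClosed S)
    {Wi : Opens ↑X} (hSW : S ⊆ (Wi : Set ↑X)) (U : Opens ↑X)
    (s : ↥(G.val.obj (op (U ⊓ Wi))))
    (hs : ∀ (x : ↑X) (hx : x ∈ U ⊓ Wi), x ∉ S → Presheaf.germ G.val (U ⊓ Wi) x hx s = 0) :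
    ∃ s' : ↥(G.val.obj (op U)),
      (∀ (x : ↑X) (hx : x ∈ U ⊓ Wi),
        Presheaf.germ G.val U x hx.1 s' = Presheaf.germ G.val (U ⊓ Wi) x hx s) ∧
      (∀ (x : ↑X) (hx : x ∈ U), x ∉ S → Presheaf.germ G.val U x hx s' = 0) := by
  classical
  set Sc : Opens ↑X := ⟨Sᶜ, hS.isOpen_compl⟩ with hSc
  have hcover : ∀ x, x ∈ U → x ∈ U ⊓ Wi ∨ x ∈ U ⊓ Sc := by
    intro x hx
    rcases Classical.em (x ∈ S) with h | h
    · exact Or.inl ⟨hx, hSW h⟩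
    · exact Or.inr ⟨hx, h⟩
  have hAB : G.val.map (homOfLE (inf_le_left : (U ⊓ Wi) ⊓ (U ⊓ Sc) ≤ U ⊓ Wi)).op s
      = G.val.map (homOfLE (inf_le_right : (U ⊓ Wi) ⊓ (U ⊓ Sc) ≤ U ⊓ Sc)).op
          (0 : ↥(G.val.obj (op (U ⊓ Sc)))) := by
    apply mySectionExt G
    intro x hx
    rw [myGermRes, myGermRes, hs x hx.1 hx.2.2, map_zero]
  obtain ⟨s', h1, h2⟩ := glueTwo G (U ⊓ Wi) (U ⊓ Sc) U inf_le_left inf_le_left hcover s 0 hAB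
  refine ⟨s', ?_, ?_⟩
  · intro x hx
    have := congrArg (Presheaf.germ G.val (U ⊓ Wi) x hx) h1
    rwa [myGermRes] at this
  · intro x hx hxS
    have := congrArg (Presheaf.germ G.val (U ⊓ Sc) x ⟨hx, hxS⟩) h2
    erw [myGermRes] at this
    rw [this]; exact map_zero _

lemma locSum (G : TopCat.Sheaf AddCommGrpCat.{u} X) (U : Opens ↑X)
    (c : ι → ↥(G.val.obj (op U)))
    (h : ∀ x : ↑X, x ∈ U → ∃ (V : Opens ↑X) (_ : x ∈ V) (hVU : V ≤ U) (t : Finset ι),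
        ∀ i ∉ t, G.val.map (homOfLE hVU).op (c i) = 0) :
    ∃ s : ↥(G.val.obj (op U)), ∀ (x : ↑X) (hx : x ∈ U) (t : Finset ι),
      (∀ i ∉ t, Presheaf.germ G.val U x hx (c i) = 0) →
      Presheaf.germ G.val U x hx s = ∑ i ∈ t, Presheaf.germ G.val U x hx (c i) := by
  classical
  choose V hxV hVU t ht using h
  set Vf : ↥U → Opens ↑X := fun p => V p.1 p.2 with hVf
  have hVfU : ∀ p, Vf p ≤ U := fun p => hVU p.1 p.2
  have hcover : U ≤ iSup Vf := fun x hx => Opens.mem_iSup.2 ⟨⟨x, hx⟩, hxV x hx⟩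
  set sf : ∀ p, ↥(G.val.obj (op (Vf p))) :=
    fun p => ∑ i ∈ t p.1 p.2, G.val.map (homOfLE (hVfU p)).op (c i) with hsf
  have hsfgerm : ∀ (p : ↥U) (x : ↑X) (hx : x ∈ Vf p),
      Presheaf.germ G.val (Vf p) x hx (sf p)
        = ∑ i ∈ t p.1 p.2, Presheaf.germ G.val U x (hVfU p hx) (c i) := by
    intro p x hx
    rw [hsf, map_sum]
    exact Finset.sum_congr rfl fun i _ => myGermRes G (hVfU p) x hx (c i)
  have hczero : ∀ (p : ↥U) (x : ↑X) (hx : x ∈ Vf p) (i : ι), i ∉ t p.1 p.2 →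
      Presheaf.germ G.val U x (hVfU p hx) (c i) = 0 := by
    intro p x hx i hi
    have := congrArg (Presheaf.germ G.val (Vf p) x hx) (ht p.1 p.2 i hi)
    rwa [myGermRes, map_zero] at this
  have hcomp : ∀ p q, G.val.map (homOfLE (inf_le_left : Vf p ⊓ Vf q ≤ Vf p)).op (sf p)
      = G.val.map (homOfLE (inf_le_right : Vf p ⊓ Vf q ≤ Vf q)).op (sf q) := by
    intro p q
    apply mySectionExt G
    intro x hx
    rw [myGermRes, myGermRes, hsfgerm p x hx.1, hsfgerm q x hx.2]
    calc ∑ i ∈ t p.1 p.2, Presheaf.germ G.val U x (hVfU p hx.1) (c i)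
        = ∑ i ∈ t p.1 p.2 ∪ t q.1 q.2, Presheaf.germ G.val U x (hVfU p hx.1) (c i) :=
          Finset.sum_subset Finset.subset_union_left
            (fun i _ hi => hczero p x hx.1 i hi)
      _ = ∑ i ∈ t p.1 p.2 ∪ t q.1 q.2, Presheaf.germ G.val U x (hVfU q hx.2) (c i) := rfl
      _ = ∑ i ∈ t q.1 q.2, Presheaf.germ G.val U x (hVfU q hx.2) (c i) :=
          (Finset.sum_subset Finset.subset_union_right
            (fun i _ hi => hczero q x hx.2 i hi)).symm
  obtain ⟨s, hs⟩ := myGluing G Vf U hVfU hcover sf hcomp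
  refine ⟨s, ?_⟩
  intro x hx t' hz'
  set p : ↥U := ⟨x, hx⟩ with hp
  have hxp : x ∈ Vf p := hxV x hx
  have h1 : Presheaf.germ G.val U x hx s
      = ∑ i ∈ t p.1 p.2, Presheaf.germ G.val U x hx (c i) := by
    have := congrArg (Presheaf.germ G.val (Vf p) x hxp) (hs p)
    rw [myGermRes, hsfgerm p x hxp] at this
    exact this
  rw [h1]
  calc ∑ i ∈ t p.1 p.2, Presheaf.germ G.val U x hx (c i)
      = ∑ i ∈ t p.1 p.2 ∪ t', Presheaf.germ G.val U x hx (c i) :=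
        Finset.sum_subset Finset.subset_union_left
          (fun i _ hi => hczero p x hxp i hi)
    _ = ∑ i ∈ t', Presheaf.germ G.val U x hx (c i) :=
        (Finset.sum_subset Finset.subset_union_right (fun i _ hi => hz' i hi)).symm

lemma germCongr (F : TopCat.Presheaf AddCommGrpCat.{u} X) (W : ι → Opens ↑X) {n : ℕ}
    (σ' : ∀ αs : Fin n → ι, ↥(F.obj (op (iInt W αs)))) {αs αs' : Fin n → ι}
    (h : αs = αs') (x : ↑X) (hx : x ∈ iInt W αs) (hx' : x ∈ iInt W αs') :
    Presheaf.germ F (iInt W αs) x hx (σ' αs)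
      = Presheaf.germ F (iInt W αs') x hx' (σ' αs') := by
  subst h; rfl

/-- **Statement 11.** If a sheaf of abelian groups `G` admits a partition of unity
subordinate to a locally finite open covering `W` of `X`, then the Čech cohomology
`H^q(W; G)` vanishes for `q ≥ 1`: every Čech cocycle of positive degree is a
coboundary. -/
theorem cech_cocycle_is_coboundary_of_partitionOfUnity
    (G : TopCat.Sheaf AddCommGrpCat.{u} X) (W : ι → Opens ↑X)
    (hLF : LocallyFinite fun i => (W i : Set ↑X))
    (hcov : ∀ x : ↑X, ∃ i, x ∈ W i)
    (pu : PartitionOfUnity G W) :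
    ∀ (q : ℕ) (σ : cechPi G.val W (q + 1)), cechδ G.val W (q + 1) σ = 0 →
      ∃ τ : cechPi G.val W q, cechδ G.val W q τ = σ := by
  classical
  intro q σ hσ
  have hσ' : ∀ γs : Fin (q + 3) → ι, cechδfun G.val W (q + 1) σ γs = 0 := by
    intro γs
    have : cechδfun G.val W (q + 1) σ = 0 := hσ
    exact congrFun this γs
  -- membership helper
  have memInt : ∀ {n : ℕ} (αs : Fin n → ι) (x : ↑X), x ∈ iInt W αs ↔ ∀ k, x ∈ W (αs k) := by
    intro n αs x
    constructor
    · intro h k; exact iInf_le (fun k => W (αs k)) k h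
    · intro h
      have hle : (⟨⋂ k, (W (αs k) : Set ↑X),
          isOpen_iInter_of_finite (fun k => (W (αs k)).2)⟩ : Opens ↑X)
          ≤ ⨅ k, W (αs k) := le_iInf fun k => fun y hy => Set.mem_iInter.1 hy k
      exact hle (Set.mem_iInter.2 h)
  -- the inclusion iInt W αs ⊓ W i ≤ iInt W (Fin.cons i αs)
  have le1 : ∀ (αs : Fin (q + 1) → ι) (i : ι),
      iInt W αs ⊓ W i ≤ iInt W (Fin.cons i αs) := by
    intro αs i
    refine le_iInf fun k => ?_
    refine Fin.cases ?_ ?_ k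
    · simpa using (inf_le_right : iInt W αs ⊓ W i ≤ W i)
    · intro j
      simpa using (inf_le_left.trans (iInf_le (fun k => W (αs k)) j) :
        iInt W αs ⊓ W i ≤ W (αs j))
  -- the local sections to be extended by zero
  have hcc : ∀ (αs : Fin (q + 1) → ι) (i : ι),
      ∃ c' : ↥(G.val.obj (op (iInt W αs))),
        (∀ (x : ↑X) (hx : x ∈ iInt W αs ⊓ W i),
          Presheaf.germ G.val (iInt W αs) x hx.1 c'
            = Presheaf.germ G.val (iInt W αs ⊓ W i) x hx
                (G.val.map (homOfLE (le1 αs i)).op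
                  ((pu.ρ i).app (op (iInt W (Fin.cons i αs))) (σ (Fin.cons i αs))))) ∧
        (∀ (x : ↑X) (hx : x ∈ iInt W αs), x ∉ pu.S i →
          Presheaf.germ G.val (iInt W αs) x hx c' = 0) := by
    intro αs i
    apply extendByZero G (pu.S_closed i) (pu.S_subset i)
    intro x hx hxS
    rw [myGermRes, ← myStalkMap, pu.vanish i x hxS]
    rfl
  choose c hc1 hc2 using hcc
  -- germ of c in terms of the stalk map of ρ i, at points of W i
  have hcgerm : ∀ (αs : Fin (q + 1) → ι) (i : ι) (x : ↑X) (hx : x ∈ iInt W αs)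
      (hxi : x ∈ W i) (hxc : x ∈ iInt W (Fin.cons i αs)),
      Presheaf.germ G.val (iInt W αs) x hx (c αs i)
        = (TopCat.Presheaf.stalkFunctor AddCommGrpCat.{u} x).map (pu.ρ i)
            (Presheaf.germ G.val (iInt W (Fin.cons i αs)) x hxc (σ (Fin.cons i αs))) := by
    intro αs i x hx hxi hxc
    erw [hc1 αs i x ⟨hx, hxi⟩, myGermRes, myStalkMap]
  -- local finiteness for the sums
  have hloc : ∀ (αs : Fin (q + 1) → ι) (x : ↑X), x ∈ iInt W αs →
      ∃ (V : Opens ↑X) (_ : x ∈ V) (hVU : V ≤ iInt W αs) (t : Finset ι),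
        ∀ i ∉ t, G.val.map (homOfLE hVU).op (c αs i) = 0 := by
    intro αs x hx
    obtain ⟨N, hN, hfin⟩ := hLF x
    obtain ⟨O, hON, hO, hxO⟩ := mem_nhds_iff.1 hN
    refine ⟨iInt W αs ⊓ ⟨O, hO⟩, ⟨hx, hxO⟩, inf_le_left, hfin.toFinset, ?_⟩
    intro i hi
    apply mySectionExt G
    intro y hy
    rw [myGermRes, map_zero]
    exact hc2 αs i y _ (fun hyS => hi (hfin.mem_toFinset.2 ⟨y, pu.S_subset i hyS, hON hy.2⟩))
  have hττ : ∀ αs : Fin (q + 1) → ι, ∃ s : ↥(G.val.obj (op (iInt W αs))),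
      ∀ (x : ↑X) (hx : x ∈ iInt W αs) (t : Finset ι),
        (∀ i ∉ t, Presheaf.germ G.val (iInt W αs) x hx (c αs i) = 0) →
        Presheaf.germ G.val (iInt W αs) x hx s
          = ∑ i ∈ t, Presheaf.germ G.val (iInt W αs) x hx (c αs i) :=
    fun αs => locSum G (iInt W αs) (c αs) (hloc αs)
  choose τ hτg using hττ
  refine ⟨τ, ?_⟩
  funext βs
  apply mySectionExt G
  intro x hx
  have hxν : ∀ ν : Fin (q + 2), x ∈ iInt W (βs ∘ ν.succAbove) :=
    fun ν => (memInt _ x).2 fun j => (memInt βs x).1 hx (ν.succAbove j)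
  have le2 : ∀ {n : ℕ} (γs : Fin (n + 1) → ι) (μ : Fin (n + 1)),
      iInt W γs ≤ iInt W (γs ∘ μ.succAbove) :=
    fun γs μ => le_iInf fun j => iInf_le (fun k => W (γs k)) (μ.succAbove j)
  obtain ⟨N, hN, hfin⟩ := hLF x
  have hxN : x ∈ N := mem_of_mem_nhds hN
  set tfin : Finset ι := hfin.toFinset with htfin
  have hnotS : ∀ i, i ∉ tfin → x ∉ pu.S i :=
    fun i hi hS => hi (hfin.mem_toFinset.2 ⟨x, pu.S_subset i hS, hxN⟩)
  -- the inner sum identity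
  have key : ∀ i : ι,
      ∑ ν : Fin (q + 2), ((-1 : ℤ) ^ (ν : ℕ)) •
        Presheaf.germ G.val (iInt W (βs ∘ ν.succAbove)) x (hxν ν) (c (βs ∘ ν.succAbove) i)
      = (TopCat.Presheaf.stalkFunctor AddCommGrpCat.{u} x).map (pu.ρ i)
          (Presheaf.germ G.val (iInt W βs) x hx (σ βs)) := by
    intro i
    by_cases hxWi : x ∈ W i
    · -- main case: use the cocycle identity at `Fin.cons i βs`
      have hxcons : ∀ ν : Fin (q + 2), x ∈ iInt W (Fin.cons i (βs ∘ ν.succAbove)) := by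
        intro ν
        refine (memInt _ x).2 fun k => ?_
        refine Fin.cases ?_ ?_ k
        · simpa using hxWi
        · intro j; simpa using (memInt _ x).1 (hxν ν) j
      have hxγ : x ∈ iInt W (Fin.cons i βs) := by
        refine (memInt _ x).2 fun k => ?_
        refine Fin.cases ?_ ?_ k
        · simpa using hxWi
        · intro j; simpa using (memInt βs x).1 hx j
      have hxall : ∀ μ : Fin (q + 3), x ∈ iInt W ((Fin.cons i βs) ∘ μ.succAbove) :=
        fun μ => (memInt _ x).2 fun j => (memInt _ x).1 hxγ (μ.succAbove j)
      have h0 : (Fin.cons i βs) ∘ (0 : Fin (q + 3)).succAbove = βs := by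
        funext j; simp [Fin.zero_succAbove, Fin.cons_succ]
      have hsucc : ∀ ν : Fin (q + 2),
          (Fin.cons i βs) ∘ (Fin.succ ν).succAbove = Fin.cons i (βs ∘ ν.succAbove) := by
        intro ν; funext k
        refine Fin.cases ?_ ?_ k
        · simp [Fin.succ_succAbove_zero]
        · intro j; simp [Fin.succ_succAbove_succ, Fin.cons_succ]
      have hcoc0 : Presheaf.germ G.val (iInt W (Fin.cons i βs)) x hxγ
          (cechδfun G.val W (q + 1) σ (Fin.cons i βs)) = 0 := by
        rw [hσ' (Fin.cons i βs)]; exact map_zero _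
      have hexpand : Presheaf.germ G.val (iInt W (Fin.cons i βs)) x hxγ
            (cechδfun G.val W (q + 1) σ (Fin.cons i βs))
          = Presheaf.germ G.val (iInt W βs) x hx (σ βs)
            - ∑ ν : Fin (q + 2), ((-1 : ℤ) ^ (ν : ℕ)) •
                Presheaf.germ G.val (iInt W (Fin.cons i (βs ∘ ν.succAbove))) x (hxcons ν)
                  (σ (Fin.cons i (βs ∘ ν.succAbove))) := by
        calc Presheaf.germ G.val (iInt W (Fin.cons i βs)) x hxγ
              (cechδfun G.val W (q + 1) σ (Fin.cons i βs))
            = ∑ μ : Fin (q + 3), ((-1 : ℤ) ^ (μ : ℕ)) •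
                Presheaf.germ G.val (iInt W ((Fin.cons i βs) ∘ μ.succAbove)) x (hxall μ)
                  (σ ((Fin.cons i βs) ∘ μ.succAbove)) := by
              erw [cechδfun, map_sum]
              refine Finset.sum_congr rfl fun μ _ => ?_
              erw [map_zsmul]
              exact congrArg (fun z => ((-1 : ℤ) ^ (μ : ℕ)) • z)
                (myGermRes G (le2 (Fin.cons i βs) μ) x hxγ (σ ((Fin.cons i βs) ∘ μ.succAbove)))
          _ = ((-1 : ℤ) ^ (((0 : Fin (q + 3))) : ℕ)) •
                Presheaf.germ G.val (iInt W ((Fin.cons i βs) ∘ (0 : Fin (q + 3)).succAbove)) x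
                  (hxall 0) (σ ((Fin.cons i βs) ∘ (0 : Fin (q + 3)).succAbove))
              + ∑ ν : Fin (q + 2), ((-1 : ℤ) ^ ((Fin.succ ν : Fin (q + 3)) : ℕ)) •
                Presheaf.germ G.val (iInt W ((Fin.cons i βs) ∘ (Fin.succ ν).succAbove)) x
                  (hxall (Fin.succ ν)) (σ ((Fin.cons i βs) ∘ (Fin.succ ν).succAbove)) :=
              Fin.sum_univ_succ _
          _ = Presheaf.germ G.val (iInt W βs) x hx (σ βs)
              + ∑ ν : Fin (q + 2), -(((-1 : ℤ) ^ (ν : ℕ)) •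
                  Presheaf.germ G.val (iInt W (Fin.cons i (βs ∘ ν.succAbove))) x (hxcons ν)
                    (σ (Fin.cons i (βs ∘ ν.succAbove)))) := by
              congr 1
              · rw [germCongr G.val W σ h0 x (hxall 0) hx]
                simp
              · refine Finset.sum_congr rfl fun ν _ => ?_
                rw [germCongr G.val W σ (hsucc ν) x (hxall (Fin.succ ν)) (hxcons ν)]
                rw [Fin.val_succ, pow_succ, mul_neg_one, neg_smul]
          _ = _ := by rw [Finset.sum_neg_distrib, ← sub_eq_add_neg]
      have hsum0 : ∑ ν : Fin (q + 2), ((-1 : ℤ) ^ (ν : ℕ)) •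
            Presheaf.germ G.val (iInt W (Fin.cons i (βs ∘ ν.succAbove))) x (hxcons ν)
              (σ (Fin.cons i (βs ∘ ν.succAbove)))
          = Presheaf.germ G.val (iInt W βs) x hx (σ βs) := by
        have := hexpand ▸ hcoc0
        exact (sub_eq_zero.1 this).symm
      calc ∑ ν : Fin (q + 2), ((-1 : ℤ) ^ (ν : ℕ)) •
            Presheaf.germ G.val (iInt W (βs ∘ ν.succAbove)) x (hxν ν) (c (βs ∘ ν.succAbove) i)
          = id (α := ↑(TopCat.Presheaf.stalk G.val x)) (∑ ν : Fin (q + 2), ((-1 : ℤ) ^ (ν : ℕ)) •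
              (TopCat.Presheaf.stalkFunctor AddCommGrpCat.{u} x).map (pu.ρ i)
                (Presheaf.germ G.val (iInt W (Fin.cons i (βs ∘ ν.succAbove))) x (hxcons ν)
                  (σ (Fin.cons i (βs ∘ ν.succAbove))))) :=
            Finset.sum_congr rfl fun ν _ => congrArg _
              (hcgerm (βs ∘ ν.succAbove) i x (hxν ν) hxWi (hxcons ν))
        _ = id (α := ↑(TopCat.Presheaf.stalk G.val x))
            ((TopCat.Presheaf.stalkFunctor AddCommGrpCat.{u} x).map (pu.ρ i)
              (∑ ν : Fin (q + 2), ((-1 : ℤ) ^ (ν : ℕ)) •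
                Presheaf.germ G.val (iInt W (Fin.cons i (βs ∘ ν.succAbove))) x (hxcons ν)
                  (σ (Fin.cons i (βs ∘ ν.succAbove))))) := by
            erw [map_sum]
            exact Finset.sum_congr rfl fun ν _ => (map_zsmul _ _ _).symm
        _ = _ := by erw [hsum0]; rfl
    · -- x ∉ W i : both sides vanish
      have hnS : x ∉ pu.S i := fun hS => hxWi (pu.S_subset i hS)
      have hl : ∀ ν : Fin (q + 2),
          Presheaf.germ G.val (iInt W (βs ∘ ν.succAbove)) x (hxν ν) (c (βs ∘ ν.succAbove) i)
            = 0 := fun ν => hc2 (βs ∘ ν.succAbove) i x (hxν ν) hnS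
      rw [pu.vanish i x hnS]
      rw [Finset.sum_eq_zero fun ν _ => by rw [hl ν, smul_zero]]
      rfl
  -- now assemble
  have hτx : ∀ ν : Fin (q + 2),
      Presheaf.germ G.val (iInt W (βs ∘ ν.succAbove)) x (hxν ν) (τ (βs ∘ ν.succAbove))
        = ∑ i ∈ tfin, Presheaf.germ G.val (iInt W (βs ∘ ν.succAbove)) x (hxν ν)
            (c (βs ∘ ν.succAbove) i) :=
    fun ν => hτg (βs ∘ ν.succAbove) x (hxν ν) tfin
      (fun i hi => hc2 (βs ∘ ν.succAbove) i x (hxν ν) (hnotS i hi))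
  obtain ⟨U', hxU', hU', t', hvan, hsum'⟩ := pu.sum_eq (iInt W βs) (σ βs) x hx
  have hφ : ∀ i : ι, (TopCat.Presheaf.stalkFunctor AddCommGrpCat.{u} x).map (pu.ρ i)
        (Presheaf.germ G.val (iInt W βs) x hx (σ βs))
      = Presheaf.germ G.val U' x hxU'
          (G.val.map (homOfLE hU').op ((pu.ρ i).app (op (iInt W βs)) (σ βs))) := by
    intro i
    rw [myStalkMap]
    exact (myGermRes G hU' x hxU' _).symm
  have hvan' : ∀ i ∉ t', (TopCat.Presheaf.stalkFunctor AddCommGrpCat.{u} x).map (pu.ρ i)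
      (Presheaf.germ G.val (iInt W βs) x hx (σ βs)) = 0 := by
    intro i hi
    rw [hφ i, hvan i hi]
    exact map_zero _
  have hsum'' : ∑ i ∈ t', (TopCat.Presheaf.stalkFunctor AddCommGrpCat.{u} x).map (pu.ρ i)
      (Presheaf.germ G.val (iInt W βs) x hx (σ βs))
      = Presheaf.germ G.val (iInt W βs) x hx (σ βs) := by
    calc (∑ i ∈ t', (TopCat.Presheaf.stalkFunctor AddCommGrpCat.{u} x).map (pu.ρ i)
          (Presheaf.germ G.val (iInt W βs) x hx (σ βs)) : ↑(TopCat.Presheaf.stalk G.val x))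
        = ∑ i ∈ t', Presheaf.germ G.val U' x hxU'
            (G.val.map (homOfLE hU').op ((pu.ρ i).app (op (iInt W βs)) (σ βs))) :=
          Finset.sum_congr rfl fun i _ => hφ i
      _ = Presheaf.germ G.val U' x hxU'
            (∑ i ∈ t', G.val.map (homOfLE hU').op ((pu.ρ i).app (op (iInt W βs)) (σ βs))) :=
          (map_sum _ _ _).symm
      _ = Presheaf.germ G.val U' x hxU' (G.val.map (homOfLE hU').op (σ βs)) := by rw [hsum']
      _ = Presheaf.germ G.val (iInt W βs) x hx (σ βs) := myGermRes G hU' x hxU' (σ βs)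
  have hfinal : ∑ i ∈ tfin, (TopCat.Presheaf.stalkFunctor AddCommGrpCat.{u} x).map (pu.ρ i)
      (Presheaf.germ G.val (iInt W βs) x hx (σ βs))
      = Presheaf.germ G.val (iInt W βs) x hx (σ βs) := by
    calc ∑ i ∈ tfin, (TopCat.Presheaf.stalkFunctor AddCommGrpCat.{u} x).map (pu.ρ i)
          (Presheaf.germ G.val (iInt W βs) x hx (σ βs))
        = ∑ i ∈ tfin ∪ t', (TopCat.Presheaf.stalkFunctor AddCommGrpCat.{u} x).map (pu.ρ i)
            (Presheaf.germ G.val (iInt W βs) x hx (σ βs)) := by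
          refine Finset.sum_subset Finset.subset_union_left fun i _ hi => ?_
          rw [pu.vanish i x (hnotS i hi)]
          rfl
      _ = ∑ i ∈ t', (TopCat.Presheaf.stalkFunctor AddCommGrpCat.{u} x).map (pu.ρ i)
            (Presheaf.germ G.val (iInt W βs) x hx (σ βs)) :=
          (Finset.sum_subset Finset.subset_union_right fun i _ hi => hvan' i hi).symm
      _ = _ := by exact hsum''
  calc Presheaf.germ G.val (iInt W βs) x hx (cechδ G.val W q τ βs)
      = ∑ ν : Fin (q + 2), ((-1 : ℤ) ^ (ν : ℕ)) •
          Presheaf.germ G.val (iInt W (βs ∘ ν.succAbove)) x (hxν ν) (τ (βs ∘ ν.succAbove)) := by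
        show Presheaf.germ G.val (iInt W βs) x hx (cechδfun G.val W q τ βs) = _
        erw [cechδfun, map_sum]
        refine Finset.sum_congr rfl fun ν _ => ?_
        erw [map_zsmul]
        exact congrArg (fun z => ((-1 : ℤ) ^ (ν : ℕ)) • z)
          (myGermRes G (le2 βs ν) x hx (τ (βs ∘ ν.succAbove)))
    _ = ∑ ν : Fin (q + 2), ((-1 : ℤ) ^ (ν : ℕ)) •
          ∑ i ∈ tfin, Presheaf.germ G.val (iInt W (βs ∘ ν.succAbove)) x (hxν ν)
            (c (βs ∘ ν.succAbove) i) :=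
        Finset.sum_congr rfl fun ν _ => congrArg _ (hτx ν)
    _ = ∑ i ∈ tfin, ∑ ν : Fin (q + 2), ((-1 : ℤ) ^ (ν : ℕ)) •
          Presheaf.germ G.val (iInt W (βs ∘ ν.succAbove)) x (hxν ν)
            (c (βs ∘ ν.succAbove) i) := by
        simp only [Finset.smul_sum]
        exact Finset.sum_comm
    _ = (∑ i ∈ tfin, (TopCat.Presheaf.stalkFunctor AddCommGrpCat.{u} x).map (pu.ρ i)
          (Presheaf.germ G.val (iInt W βs) x hx (σ βs)) : ↑(TopCat.Presheaf.stalk G.val x)) :=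
        Finset.sum_congr rfl fun i _ => key i
    _ = Presheaf.germ G.val (iInt W βs) x hx (σ βs) := hfinal

end Paper
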